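/- arXiv:2505.14641 — 2 statements merged into one kernel-verified Lean document; each statement's English description precedes it below -/
import Mathlib

section
/- For every natural number q ≥ 3 there exists a subset U of the vertices of the Hamming graph H(2,q) with |U| = 3q such that the VC-dimension of (U, n(U)) is strictly less than 3. -/
/-- Two vertices of the Hamming graph `H(d,q,t)` (vertex set `(ZMod q)^d`) are adjacent
if and only if they differ in exactly `t` coordinates. -/
def hammingAdj {d q : ℕ} (t : ℕ) (x y : Fin d → ZMod q) : Prop :=
  (Finset.univ.filter fun i => x i ≠ y i).card = t

/-- `W ⊆ U` is shattered by the neighborhoods `n(U)`: for every `S ⊆ W` there is a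
vertex `u ∈ U` with `n(u) ∩ W = S`. -/
def Shatters {d q : ℕ} (t : ℕ) (U W : Finset (Fin d → ZMod q)) : Prop :=
  ∀ S ⊆ W, ∃ u ∈ U, ∀ w ∈ W, (w ∈ S ↔ hammingAdj t u w)

section Aux

variable {q : ℕ}

lemma ext2 {v v' : Fin 2 → ZMod q} (h0 : v 0 = v' 0) (h1 : v 1 = v' 1) : v = v' := by
  funext i; fin_cases i <;> assumption

lemma adj_imp {u w : Fin 2 → ZMod q} (h : hammingAdj 1 u w) :
    (u 0 = w 0 ∧ u 1 ≠ w 1) ∨ (u 0 ≠ w 0 ∧ u 1 = w 1) := by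
  unfold hammingAdj at h
  rw [Finset.card_filter, Fin.sum_univ_two] at h
  by_cases h0 : u 0 = w 0 <;> by_cases h1 : u 1 = w 1 <;>
    simp [h0, h1] at h ⊢ <;> tauto

/-- The set of 3 diagonals. -/
def Uset (q : ℕ) [NeZero q] : Finset (Fin 2 → ZMod q) :=
  Finset.image (fun p : ZMod q × Fin 3 => ![p.1, p.1 + (p.2.val : ZMod q)]) Finset.univ

lemma mem_Uset [NeZero q] {v : Fin 2 → ZMod q} :
    v ∈ Uset q ↔ ∃ k : ℕ, k < 3 ∧ v 1 = v 0 + (k : ZMod q) := by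
  constructor
  · intro hv
    obtain ⟨p, -, hp⟩ := Finset.mem_image.mp hv
    exact ⟨p.2.val, p.2.isLt, by rw [← hp]; simp⟩
  · rintro ⟨k, hk, hv⟩
    refine Finset.mem_image.mpr ⟨(v 0, ⟨k, hk⟩), Finset.mem_univ _, ?_⟩
    refine ext2 ?_ ?_ <;> simp [hv]

lemma card_Uset [NeZero q] (hq : 3 ≤ q) : (Uset q).card = 3 * q := by
  rw [Uset, Finset.card_image_of_injective _ ?_, Finset.card_univ]
  · simp [ZMod.card, mul_comm]
  · rintro ⟨x, a⟩ ⟨y, b⟩ h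
    have h0 : x = y := by
      have := congrFun h 0; simpa using this
    have h1 : x + (a.val : ZMod q) = y + (b.val : ZMod q) := by
      have := congrFun h 1; simpa using this
    have hab : (a.val : ZMod q) = (b.val : ZMod q) := by
      rw [h0] at h1; exact add_left_cancel h1
    have : a.val = b.val := by
      have := congrArg ZMod.val hab
      rwa [ZMod.val_cast_of_lt (lt_of_lt_of_le a.isLt hq),
        ZMod.val_cast_of_lt (lt_of_lt_of_le b.isLt hq)] at this
    simp [h0, Fin.ext this]

/-- Case A: two of the three points share a column. -/
lemma caseA [NeZero q] {W : Finset (Fin 2 → ZMod q)} (hWU : W ⊆ Uset q)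
    (hS : Shatters 1 (Uset q) W) {w1 w2 w3 : Fin 2 → ZMod q}
    (h1 : w1 ∈ W) (h2 : w2 ∈ W) (h3 : w3 ∈ W)
    (h12 : w1 ≠ w2) (h31 : w3 ≠ w1) (h32 : w3 ≠ w2) (hcol : w1 0 = w2 0) : False := by
  have hrow : w1 1 ≠ w2 1 := fun h => h12 (ext2 hcol h)
  obtain ⟨u, hu, hadj⟩ := hS {w1, w2} (by
    intro x hx
    rcases Finset.mem_insert.mp hx with rfl | hx
    · exact h1
    · rcases Finset.mem_singleton.mp hx with rfl; exact h2)
  obtain ⟨u', hu', hadj'⟩ := hS W subset_rfl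
  have a1 : hammingAdj 1 u w1 := (hadj w1 h1).1 (by simp)
  have a2 : hammingAdj 1 u w2 := (hadj w2 h2).1 (by simp)
  have na3 : ¬ hammingAdj 1 u w3 := by
    intro h
    have := (hadj w3 h3).2 h
    rcases Finset.mem_insert.mp this with h' | h'
    · exact h31 h'
    · exact h32 (Finset.mem_singleton.mp h')
  have b1 : hammingAdj 1 u' w1 := (hadj' w1 h1).1 h1
  have b2 : hammingAdj 1 u' w2 := (hadj' w2 h2).1 h2
  have b3 : hammingAdj 1 u' w3 := (hadj' w3 h3).1 h3
  have key : ∀ z : Fin 2 → ZMod q, hammingAdj 1 z w1 → hammingAdj 1 z w2 →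
      z 0 = w1 0 ∧ z 1 ≠ w1 1 ∧ z 1 ≠ w2 1 := by
    intro z az1 az2
    rcases adj_imp az1 with ⟨c1, r1⟩ | ⟨c1, r1⟩ <;>
      rcases adj_imp az2 with ⟨c2, r2⟩ | ⟨c2, r2⟩
    · exact ⟨c1, r1, r2⟩
    · exact absurd (c1.trans hcol) c2
    · exact absurd (c2.trans hcol.symm) c1
    · exact absurd (r1.symm.trans r2) hrow
  obtain ⟨uc, un1, un2⟩ := key u a1 a2
  obtain ⟨uc', un1', un2'⟩ := key u' b1 b2
  obtain ⟨k1, hk1, e1⟩ := mem_Uset.mp (hWU h1)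
  obtain ⟨k2, hk2, e2⟩ := mem_Uset.mp (hWU h2)
  obtain ⟨ku, hku, eu⟩ := mem_Uset.mp hu
  obtain ⟨ku', hku', eu'⟩ := mem_Uset.mp hu'
  -- all in the same column
  have hk12 : k1 ≠ k2 := by
    rintro rfl
    exact hrow (by rw [e1, e2, hcol])
  have hku1 : ku ≠ k1 := by
    rintro rfl
    exact un1 (by rw [eu, e1, uc])
  have hku2 : ku ≠ k2 := by
    rintro rfl
    exact un2 (by rw [eu, e2, uc, hcol])
  have hku'1 : ku' ≠ k1 := by
    rintro rfl
    exact un1' (by rw [eu', e1, uc'])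
  have hku'2 : ku' ≠ k2 := by
    rintro rfl
    exact un2' (by rw [eu', e2, uc', hcol])
  have : ku = ku' := by omega
  have huu' : u = u' := by
    refine ext2 (uc.trans uc'.symm) ?_
    rw [eu, eu', uc, uc', this]
  rw [huu'] at na3
  exact na3 b3

/-- Case B: two of the three points share a row. -/
lemma caseB [NeZero q] {W : Finset (Fin 2 → ZMod q)} (hWU : W ⊆ Uset q)
    (hS : Shatters 1 (Uset q) W) {w1 w2 w3 : Fin 2 → ZMod q}
    (h1 : w1 ∈ W) (h2 : w2 ∈ W) (h3 : w3 ∈ W)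
    (h12 : w1 ≠ w2) (h31 : w3 ≠ w1) (h32 : w3 ≠ w2) (hrow : w1 1 = w2 1) : False := by
  have hcol : w1 0 ≠ w2 0 := fun h => h12 (ext2 h hrow)
  obtain ⟨u, hu, hadj⟩ := hS {w1, w2} (by
    intro x hx
    rcases Finset.mem_insert.mp hx with rfl | hx
    · exact h1
    · rcases Finset.mem_singleton.mp hx with rfl; exact h2)
  obtain ⟨u', hu', hadj'⟩ := hS W subset_rfl
  have a1 : hammingAdj 1 u w1 := (hadj w1 h1).1 (by simp)
  have a2 : hammingAdj 1 u w2 := (hadj w2 h2).1 (by simp)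
  have na3 : ¬ hammingAdj 1 u w3 := by
    intro h
    have := (hadj w3 h3).2 h
    rcases Finset.mem_insert.mp this with h' | h'
    · exact h31 h'
    · exact h32 (Finset.mem_singleton.mp h')
  have b1 : hammingAdj 1 u' w1 := (hadj' w1 h1).1 h1
  have b2 : hammingAdj 1 u' w2 := (hadj' w2 h2).1 h2
  have b3 : hammingAdj 1 u' w3 := (hadj' w3 h3).1 h3
  have key : ∀ z : Fin 2 → ZMod q, hammingAdj 1 z w1 → hammingAdj 1 z w2 →
      z 1 = w1 1 ∧ z 0 ≠ w1 0 ∧ z 0 ≠ w2 0 := by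
    intro z az1 az2
    rcases adj_imp az1 with ⟨c1, r1⟩ | ⟨c1, r1⟩ <;>
      rcases adj_imp az2 with ⟨c2, r2⟩ | ⟨c2, r2⟩
    · exact absurd (c1.symm.trans c2) hcol
    · exact absurd (r2.trans hrow.symm) r1
    · exact absurd (r1.trans hrow) r2
    · exact ⟨r1, c1, c2⟩
  obtain ⟨uc, un1, un2⟩ := key u a1 a2
  obtain ⟨uc', un1', un2'⟩ := key u' b1 b2
  obtain ⟨k1, hk1, e1⟩ := mem_Uset.mp (hWU h1)
  obtain ⟨k2, hk2, e2⟩ := mem_Uset.mp (hWU h2)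
  obtain ⟨ku, hku, eu⟩ := mem_Uset.mp hu
  obtain ⟨ku', hku', eu'⟩ := mem_Uset.mp hu'
  -- column determined by row and diagonal index
  have hk12 : k1 ≠ k2 := by
    rintro rfl
    apply hcol
    have : w1 0 + (k1 : ZMod q) = w2 0 + (k1 : ZMod q) := by rw [← e1, ← e2, hrow]
    exact add_right_cancel this
  have hku1 : ku ≠ k1 := by
    rintro rfl
    apply un1
    have : u 0 + (ku : ZMod q) = w1 0 + (ku : ZMod q) := by rw [← eu, ← e1, uc]
    exact add_right_cancel this
  have hku2 : ku ≠ k2 := by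
    rintro rfl
    apply un2
    have : u 0 + (ku : ZMod q) = w2 0 + (ku : ZMod q) := by rw [← eu, ← e2, uc, hrow]
    exact add_right_cancel this
  have hku'1 : ku' ≠ k1 := by
    rintro rfl
    apply un1'
    have : u' 0 + (ku' : ZMod q) = w1 0 + (ku' : ZMod q) := by rw [← eu', ← e1, uc']
    exact add_right_cancel this
  have hku'2 : ku' ≠ k2 := by
    rintro rfl
    apply un2'
    have : u' 0 + (ku' : ZMod q) = w2 0 + (ku' : ZMod q) := by
      rw [← eu', ← e2, uc', hrow]
    exact add_right_cancel this
  have hkk : ku = ku' := by omega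
  have huu' : u = u' := by
    have hc : u 0 = u' 0 := by
      have : u 0 + (ku : ZMod q) = u' 0 + (ku : ZMod q) := by
        rw [← eu, hkk, ← eu', uc, uc']
      exact add_right_cancel this
    exact ext2 hc (uc.trans uc'.symm)
  rw [huu'] at na3
  exact na3 b3

/-- Case C: all rows and all columns distinct. -/
lemma caseC [NeZero q] {W : Finset (Fin 2 → ZMod q)}
    (hS : Shatters 1 (Uset q) W) {w1 w2 w3 : Fin 2 → ZMod q}
    (h1 : w1 ∈ W) (h2 : w2 ∈ W) (h3 : w3 ∈ W)
    (c12 : w1 0 ≠ w2 0) (c13 : w1 0 ≠ w3 0) (c23 : w2 0 ≠ w3 0)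
    (r12 : w1 1 ≠ w2 1) (r13 : w1 1 ≠ w3 1) (r23 : w2 1 ≠ w3 1) : False := by
  obtain ⟨u', hu', hadj'⟩ := hS W subset_rfl
  have b1 := adj_imp ((hadj' w1 h1).1 h1)
  have b2 := adj_imp ((hadj' w2 h2).1 h2)
  have b3 := adj_imp ((hadj' w3 h3).1 h3)
  rcases b1 with ⟨e1, -⟩ | ⟨-, e1⟩ <;> rcases b2 with ⟨e2, -⟩ | ⟨-, e2⟩ <;>
    rcases b3 with ⟨e3, -⟩ | ⟨-, e3⟩
  · exact c12 (e1.symm.trans e2)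
  · exact c12 (e1.symm.trans e2)
  · exact c13 (e1.symm.trans e3)
  · exact r23 (e2.symm.trans e3)
  · exact c23 (e2.symm.trans e3)
  · exact r13 (e1.symm.trans e3)
  · exact r12 (e1.symm.trans e2)
  · exact r12 (e1.symm.trans e2)

end Aux

/-- for every `q ≥ 3` there is `U ⊆ V(H(2,q))` with `|U| = 3q`
whose VC-dimension is strictly less than 3. -/
theorem exists_vc_dim_lt_three_H2q (q : ℕ) (hq : 3 ≤ q) :
    ∃ U : Finset (Fin 2 → ZMod q),
      U.card = 3 * q ∧
      (∀ W ⊆ U, Shatters 1 U W → W.card < 3) := by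
  haveI : NeZero q := ⟨by omega⟩
  refine ⟨Uset q, card_Uset hq, ?_⟩
  intro W hWU hS
  by_contra hc
  push_neg at hc
  obtain ⟨W', hW'W, hW'3⟩ := Finset.exists_subset_card_eq hc
  obtain ⟨a, b, c, hab, hac, hbc, rfl⟩ := Finset.card_eq_three.mp hW'3
  have ha : a ∈ W := hW'W (by simp)
  have hb : b ∈ W := hW'W (by simp)
  have hcm : c ∈ W := hW'W (by simp)
  by_cases e1 : a 0 = b 0
  · exact caseA hWU hS ha hb hcm hab (Ne.symm hac) (Ne.symm hbc) e1
  by_cases e2 : a 0 = c 0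
  · exact caseA hWU hS ha hcm hb hac (Ne.symm hab) hbc e2
  by_cases e3 : b 0 = c 0
  · exact caseA hWU hS hb hcm ha hbc hab hac e3
  by_cases f1 : a 1 = b 1
  · exact caseB hWU hS ha hb hcm hab (Ne.symm hac) (Ne.symm hbc) f1
  by_cases f2 : a 1 = c 1
  · exact caseB hWU hS ha hcm hb hac (Ne.symm hab) hbc f2
  by_cases f3 : b 1 = c 1
  · exact caseB hWU hS hb hcm ha hbc hab hac f3
  exact caseC hS ha hb hcm e1 e2 e3 f1 f2 f3
end

section
/- Let q ≥ 3 be a natural number, and let U be a subset of the vertices of the Hamming graph H(2,q,2) with |U| ≥ 2q. Then the VC-dimension of (U, n(U)) is at least 2. -/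
lemma adj_iff {q : ℕ} {x y : Fin 2 → ZMod q} :
    hammingAdj 2 x y ↔ (x 0 ≠ y 0 ∧ x 1 ≠ y 1) := by
  have : ((Finset.univ.filter fun i => x i ≠ y i).card = Fintype.card (Fin 2)) ↔
      (x 0 ≠ y 0 ∧ x 1 ≠ y 1) := by
    rw [Finset.card_eq_iff_eq_univ, Finset.eq_univ_iff_forall]
    simp [Fin.forall_fin_two]
  exact this

lemma adj_of {q : ℕ} {x y : Fin 2 → ZMod q} (h0 : x 0 ≠ y 0) (h1 : x 1 ≠ y 1) :
    hammingAdj 2 x y := adj_iff.mpr ⟨h0, h1⟩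

lemma not_adj_fst {q : ℕ} {x y : Fin 2 → ZMod q} (h : x 0 = y 0) : ¬ hammingAdj 2 x y :=
  fun hc => (adj_iff.mp hc).1 h

lemma not_adj_snd {q : ℕ} {x y : Fin 2 → ZMod q} (h : x 1 = y 1) : ¬ hammingAdj 2 x y :=
  fun hc => (adj_iff.mp hc).2 h

lemma fun2_ext {q : ℕ} {u v : Fin 2 → ZMod q} (h0 : u 0 = v 0) (h1 : u 1 = v 1) : u = v := by
  funext i; fin_cases i <;> assumption

lemma zmod_distinct {q : ℕ} (hq : 3 ≤ q) :
    (0 : ZMod q) ≠ 1 ∧ (0 : ZMod q) ≠ 2 ∧ (1 : ZMod q) ≠ 2 := by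
  haveI : NeZero q := ⟨by omega⟩
  have key : ∀ a b : ℕ, a < q → b < q → (a : ZMod q) = (b : ZMod q) → a = b := by
    intro a b ha hb h
    have := congrArg ZMod.val h
    rwa [ZMod.val_cast_of_lt ha, ZMod.val_cast_of_lt hb] at this
  refine ⟨fun h => ?_, fun h => ?_, fun h => ?_⟩
  · have := key 0 1 (by omega) (by omega) (by push_cast; exact h); omega
  · have := key 0 2 (by omega) (by omega) (by push_cast; exact h); omega
  · have := key 1 2 (by omega) (by omega) (by push_cast; exact h); omega

lemma surj_of_card {α β : Type*} [DecidableEq β] [Fintype β] (S : Finset α) (f : α → β)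
    (hinj : Set.InjOn f S) (hcard : Fintype.card β ≤ S.card) : ∀ b, ∃ a ∈ S, f a = b := by
  intro b
  have h1 : (S.image f).card = S.card := Finset.card_image_of_injOn hinj
  have h2 : (S.image f) = Finset.univ := by
    apply Finset.eq_univ_of_card
    have := Finset.card_le_card (Finset.subset_univ (S.image f))
    rw [Finset.card_univ] at *; omega
  have : b ∈ S.image f := by rw [h2]; exact Finset.mem_univ b
  simpa using this

lemma arith_pos {q u : ℕ} (hq : 3 ≤ q) (hU : 2 * q ≤ u) : 0 < u := by omega

lemma arith_pos2 {m : ℕ} (h : 2 ≤ m) : 0 < m := by omega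

lemma arith_le1 {n : ℕ} (h : ¬ 2 ≤ n) : n ≤ 1 := by omega

lemma arith_lt2 {n : ℕ} (h : n < 2) : n ≤ 1 := by omega

lemma arith_le1' {n : ℕ} (h1 : n < 3) (h2 : n ≠ 2) : n ≤ 1 := by omega

lemma arith_maxrow {q u rc : ℕ} (hq : 3 ≤ q) (hU : 2 * q ≤ u) (h1 : u ≤ 1 * rc)
    (h2 : rc ≤ q) : False := by omega

lemma arith_sdiff {tc pc sdc : ℕ} (h1 : 3 ≤ tc) (hp : pc ≤ 2) (h2 : tc - pc ≤ sdc) :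
    0 < sdc := by omega

lemma arith_b {q u m vc : ℕ} (hq : 3 ≤ q) (hU : 2 * q ≤ u) (he : m + vc = u)
    (hm : m ≤ q) (hv : vc ≤ 2) : False := by omega

lemma arith_ci1 {q u m vc : ℕ} (hq : 3 ≤ q) (hU : 2 * q ≤ u) (he : m + vc = u)
    (hm : m ≤ q) (hv : vc ≤ m) : m = q := by omega

lemma arith_ci2 {q u m vc : ℕ} (hq : 3 ≤ q) (hU : 2 * q ≤ u) (he : m + vc = u)
    (hm : m ≤ q) (hv : vc ≤ q - 1) : False := by omega

lemma arith_cii {q u m vc ac bc : ℕ} (hq : 3 ≤ q) (hU : 2 * q ≤ u) (he : m + vc = u)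
    (hm : m ≤ q) (hab : ac + bc = vc) (ha : ac ≤ q - m) (hb : bc ≤ q - 1) : False := by omega

lemma arith_col {q u : ℕ} (hq : 3 ≤ q) (hU : 2 * q ≤ u) (h : u ≤ q * 1) : False := by omega

lemma arith_colfull {q u f2 n2 f1 : ℕ} (hU : 2 * q ≤ u) (hs : f2 + n2 = u)
    (hle : n2 ≤ f1) (hf2 : f2 ≤ q) : q ≤ f1 := by omega

lemma shatter_pair {q : ℕ} (U : Finset (Fin 2 → ZMod q))
    (w1 w2 u0 u1 u2 uf : Fin 2 → ZMod q)
    (hw1 : w1 ∈ U) (hw2 : w2 ∈ U) (hu0 : u0 ∈ U) (hu1 : u1 ∈ U) (hu2 : u2 ∈ U)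
    (huf : uf ∈ U) (hne : w1 ≠ w2)
    (h01 : ¬ hammingAdj 2 u0 w1) (h02 : ¬ hammingAdj 2 u0 w2)
    (h11 : hammingAdj 2 u1 w1) (h12 : ¬ hammingAdj 2 u1 w2)
    (h21 : ¬ hammingAdj 2 u2 w1) (h22 : hammingAdj 2 u2 w2)
    (hf1 : hammingAdj 2 uf w1) (hf2 : hammingAdj 2 uf w2) :
    ∃ W ⊆ U, W.card = 2 ∧ Shatters 2 U W := by
  refine ⟨{w1, w2}, ?_, ?_, ?_⟩
  · intro x hx
    rcases Finset.mem_insert.mp hx with h | h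
    · exact h ▸ hw1
    · exact (Finset.mem_singleton.mp h) ▸ hw2
  · exact Finset.card_pair hne
  · intro S hS
    by_cases h1 : w1 ∈ S <;> by_cases h2 : w2 ∈ S
    · refine ⟨uf, huf, fun w hw => ?_⟩
      rcases Finset.mem_insert.mp hw with h | h
      · subst h; exact iff_of_true h1 hf1
      · rw [Finset.mem_singleton] at h; subst h; exact iff_of_true h2 hf2
    · refine ⟨u1, hu1, fun w hw => ?_⟩
      rcases Finset.mem_insert.mp hw with h | h
      · subst h; exact iff_of_true h1 h11
      · rw [Finset.mem_singleton] at h; subst h; exact iff_of_false h2 h12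
    · refine ⟨u2, hu2, fun w hw => ?_⟩
      rcases Finset.mem_insert.mp hw with h | h
      · subst h; exact iff_of_false h1 h21
      · rw [Finset.mem_singleton] at h; subst h; exact iff_of_true h2 h22
    · refine ⟨u0, hu0, fun w hw => ?_⟩
      rcases Finset.mem_insert.mp hw with h | h
      · subst h; exact iff_of_false h1 h01
      · rw [Finset.mem_singleton] at h; subst h; exact iff_of_false h2 h02

/-- if `q ≥ 3` and `U ⊆ V(H(2,q,2))` has `|U| ≥ 2q`,
then the VC-dimension of `(U, n(U))` is at least 2. -/
theorem vc_dim_ge_two_H2q2 (q : ℕ) (hq : 3 ≤ q)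
    (U : Finset (Fin 2 → ZMod q)) (hU : 2 * q ≤ U.card) :
    ∃ W ⊆ U, W.card = 2 ∧ Shatters 2 U W := by
  classical
  haveI : NeZero q := ⟨by omega⟩
  have hcardZ : Fintype.card (ZMod q) = q := ZMod.card q
  obtain ⟨hz01, hz02, hz12⟩ := zmod_distinct hq
  -- a fiber with constant second coordinate has card ≤ q
  have fib_snd_le : ∀ (S : Finset (Fin 2 → ZMod q)) (b : ZMod q),
      (∀ u ∈ S, u 1 = b) → S.card ≤ q := by
    intro S b hb
    have := Finset.card_le_card_of_injOn (fun u => u 0)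
      (fun u _ => Finset.mem_univ (u 0))
      (fun u hu v hv h => fun2_ext h (by rw [hb u hu, hb v hv]))
    rwa [Finset.card_univ, hcardZ] at this
  have fib_fst_le : ∀ (S : Finset (Fin 2 → ZMod q)) (x : ZMod q),
      (∀ u ∈ S, u 0 = x) → S.card ≤ q := by
    intro S x hx
    have := Finset.card_le_card_of_injOn (fun u => u 1)
      (fun u _ => Finset.mem_univ (u 1))
      (fun u hu v hv h => fun2_ext (by rw [hx u hu, hx v hv]) h)
    rwa [Finset.card_univ, hcardZ] at this
  by_cases hl : 3 ≤ (U.image fun u => u 1).card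
  · -- MAIN CASE : at least three columns
    -- pick a row `a` of maximal size
    have hUne : U.Nonempty := Finset.card_pos.mp (arith_pos hq hU)
    have hrowsne : (U.image fun u => u 0).Nonempty := hUne.image _
    have hex : ∃ x ∈ (U.image fun u => u 0), ∀ x' ∈ (U.image fun u => u 0),
        (U.filter fun u => u 0 = x').card ≤ (U.filter fun u => u 0 = x).card :=
      Finset.exists_max_image (U.image fun u => u 0)
        (fun x => (U.filter fun u => u 0 = x).card) hrowsne
    obtain ⟨a, haR, hmax⟩ := hex
    set m := (U.filter fun u => u 0 = a).card with hm
    have hm_le : m ≤ q := fib_fst_le _ a (fun u hu => (Finset.mem_filter.mp hu).2)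
    -- max row has ≥ 2 points
    have hm2 : 2 ≤ m := by
      by_contra hc
      have hb : ∀ b ∈ (U.image fun u => u 0),
          (U.filter fun u => (fun u => u 0) u = b).card ≤ 1 := by
        intro b hbmem
        exact le_trans (hmax b hbmem) (arith_le1 hc)
      have h1 := Finset.card_le_mul_card_image (f := fun u => u 0) U 1 hb
      have h2 : (U.image fun u => u 0).card ≤ q := by
        have := Finset.card_le_card (Finset.subset_univ (U.image fun u => u 0))
        rwa [Finset.card_univ, hcardZ] at this
      exact arith_maxrow hq hU h1 h2
    set V := U.filter (fun u => ¬ u 0 = a) with hV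
    have hVcard : m + V.card = U.card := by
      rw [hm, hV]; exact Finset.card_filter_add_card_filter_not _
    have hVmem : ∀ v ∈ V, v ∈ U ∧ v 0 ≠ a := fun v hv => Finset.mem_filter.mp hv
    set Ra := ((U.filter fun u => u 0 = a).image fun u => u 1) with hRa
    have hRa_card : Ra.card = m := by
      rw [hRa]
      exact Finset.card_image_of_injOn (fun u hu v hv h =>
        fun2_ext (by rw [(Finset.mem_filter.mp hu).2, (Finset.mem_filter.mp hv).2]) h)
    have memRa : ∀ b ∈ Ra, ∃ u ∈ U, u 0 = a ∧ u 1 = b := by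
      intro b hb
      obtain ⟨u, hu, hub⟩ := Finset.mem_image.mp hb
      exact ⟨u, (Finset.mem_filter.mp hu).1, (Finset.mem_filter.mp hu).2, hub⟩
    have inRa : ∀ u ∈ U, u 0 = a → u 1 ∈ Ra := by
      intro u hu h0
      exact Finset.mem_image.mpr ⟨u, Finset.mem_filter.mpr ⟨hu, h0⟩, rfl⟩
    set T := (V.image fun u => u 1) with hT
    have memT : ∀ b ∈ T, ∃ u ∈ U, u 0 ≠ a ∧ u 1 = b := by
      intro b hb
      obtain ⟨u, hu, hub⟩ := Finset.mem_image.mp hb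
      exact ⟨u, (hVmem u hu).1, (hVmem u hu).2, hub⟩
    have inT : ∀ u ∈ U, u 0 ≠ a → u 1 ∈ T := by
      intro u hu h0
      exact Finset.mem_image.mpr ⟨u, Finset.mem_filter.mpr ⟨hu, h0⟩, rfl⟩
    by_cases hTR : 2 ≤ (T ∩ Ra).card
    · by_cases hT3 : 3 ≤ T.card
      · -- SUBCASE (a) : row configuration
        obtain ⟨b1, hb1, b2, hb2, hb12⟩ := Finset.one_lt_card.mp hTR
        obtain ⟨hb1T, hb1Ra⟩ := Finset.mem_inter.mp hb1
        obtain ⟨hb2T, hb2Ra⟩ := Finset.mem_inter.mp hb2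
        obtain ⟨w1, hw1U, hw1a, hw1b⟩ := memRa b1 hb1Ra
        obtain ⟨w2, hw2U, hw2a, hw2b⟩ := memRa b2 hb2Ra
        obtain ⟨u1, hu1U, hu1a, hu1b⟩ := memT b2 hb2T
        obtain ⟨u2, hu2U, hu2a, hu2b⟩ := memT b1 hb1T
        -- third column
        have hp2 : ({b1, b2} : Finset (ZMod q)).card ≤ 2 :=
          Finset.card_insert_le _ _ |>.trans (by simp)
        have hsd : (T \ {b1, b2}).Nonempty :=
          Finset.card_pos.mp (arith_sdiff hT3 hp2 (Finset.le_card_sdiff _ _))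
        obtain ⟨b3, hb3⟩ := hsd
        obtain ⟨hb3T, hb3n⟩ := Finset.mem_sdiff.mp hb3
        have hb31 : b3 ≠ b1 := by simp at hb3n; exact hb3n.1
        have hb32 : b3 ≠ b2 := by simp at hb3n; exact hb3n.2
        obtain ⟨uf, hufU, hufa, hufb⟩ := memT b3 hb3T
        refine shatter_pair U w1 w2 w1 u1 u2 uf hw1U hw2U hw1U hu1U hu2U hufU ?_ ?_ ?_ ?_ ?_ ?_ ?_ ?_ ?_
        · intro h; rw [h] at hw1b; exact hb12 (hw1b.symm.trans hw2b)
        · exact not_adj_fst rfl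
        · exact not_adj_fst (by rw [hw1a, hw2a])
        · exact adj_of (by rw [hw1a]; exact hu1a) (by rw [hu1b, hw1b]; exact fun h => hb12 h.symm)
        · exact not_adj_snd (by rw [hu1b, hw2b])
        · exact not_adj_snd (by rw [hu2b, hw1b])
        · exact adj_of (by rw [hw2a]; exact hu2a) (by rw [hu2b, hw2b]; exact hb12)
        · exact adj_of (by rw [hw1a]; exact hufa) (by rw [hufb, hw1b]; exact hb31)
        · exact adj_of (by rw [hw2a]; exact hufa) (by rw [hufb, hw2b]; exact hb32)
      · -- SUBCASE (b) : V contained in two columns of Ra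
        push_neg at hT3
        obtain ⟨b1, hb1, b2, hb2, hb12⟩ := Finset.one_lt_card.mp hTR
        obtain ⟨hb1T, hb1Ra⟩ := Finset.mem_inter.mp hb1
        obtain ⟨hb2T, hb2Ra⟩ := Finset.mem_inter.mp hb2
        have hTeq : T = {b1, b2} := by
          refine (Finset.eq_of_subset_of_card_le ?_ ?_).symm
          · intro y hy
            rcases Finset.mem_insert.mp hy with h | h
            · exact h ▸ hb1T
            · exact (Finset.mem_singleton.mp h) ▸ hb2T
          · rw [Finset.card_pair hb12]; exact Nat.le_of_lt_succ hT3
        -- every column of U belongs to Ra, hence m ≥ 3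
        have hcolssub : (U.image fun u => u 1) ⊆ Ra := by
          intro y hy
          obtain ⟨u, hu, huy⟩ := Finset.mem_image.mp hy
          by_cases h0 : u 0 = a
          · exact huy ▸ inRa u hu h0
          · have := inT u hu h0
            rw [huy, hTeq] at this
            rcases Finset.mem_insert.mp this with h | h
            · exact h ▸ hb1Ra
            · exact (Finset.mem_singleton.mp h) ▸ hb2Ra
        have hm3 : 3 ≤ m := by
          have h := Finset.card_le_card hcolssub
          rw [hRa_card] at h
          exact le_trans hl h
        obtain ⟨c, hcRa, hc1, hc2⟩ : ∃ c ∈ Ra, c ≠ b1 ∧ c ≠ b2 := by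
          have hsd : (Ra \ {b1, b2}).Nonempty := by
            have h2 : ({b1, b2} : Finset (ZMod q)).card ≤ 2 :=
              Finset.card_insert_le _ _ |>.trans (by simp)
            have h3 : 3 ≤ Ra.card := by rw [hRa_card]; exact hm3
            exact Finset.card_pos.mp (arith_sdiff h3 h2 (Finset.le_card_sdiff _ _))
          obtain ⟨c, hc⟩ := hsd
          obtain ⟨hcRa, hcn⟩ := Finset.mem_sdiff.mp hc
          simp at hcn
          exact ⟨c, hcRa, hcn.1, hcn.2⟩
        obtain ⟨w1, hw1U, hw1a, hw1c⟩ := memRa c hcRa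
        obtain ⟨u0, hu0U, hu0a, hu0b⟩ := memRa b1 hb1Ra
        by_cases hpair : ∃ v ∈ U, v 0 ≠ a ∧ v 1 = b1 ∧ ∃ w ∈ U, w 0 ≠ a ∧ w 1 = b2 ∧ w 0 ≠ v 0
        · obtain ⟨v, hvU, hva, hvb, w, hwU, hwa, hwb, hwv⟩ := hpair
          refine shatter_pair U w1 v u0 v w1 w hw1U hvU hu0U hvU hw1U hwU ?_ ?_ ?_ ?_ ?_ ?_ ?_ ?_ ?_
          · intro h; rw [← h] at hva; exact hva hw1a
          · exact not_adj_fst (by rw [hu0a, hw1a])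
          · exact not_adj_snd (by rw [hu0b, hvb])
          · exact adj_of (by rw [hw1a]; exact hva) (by rw [hvb, hw1c]; exact fun h => hc1 h.symm)
          · exact not_adj_fst rfl
          · exact not_adj_fst rfl
          · exact adj_of (by rw [hw1a]; exact fun h => hva h.symm) (by rw [hw1c, hvb]; exact hc1)
          · exact adj_of (by rw [hw1a]; exact hwa) (by rw [hwb, hw1c]; exact fun h => hc2 h.symm)
          · exact adj_of hwv (by rw [hwb, hvb]; exact fun h => hb12 h.symm)
        · -- no such pair : V has at most 2 elements, contradiction
          exfalso
          push_neg at hpair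
          obtain ⟨p1, hp1U, hp1a, hp1b⟩ := memT b1 hb1T
          obtain ⟨p2, hp2U, hp2a, hp2b⟩ := memT b2 hb2T
          have hx12 : p2 0 = p1 0 := hpair p1 hp1U hp1a hp1b p2 hp2U hp2a hp2b
          have hrow : ∀ v ∈ V, v 0 = p1 0 := by
            intro v hv
            obtain ⟨hvU, hva⟩ := hVmem v hv
            have hvT := inT v hvU hva
            rw [hTeq] at hvT
            rcases Finset.mem_insert.mp hvT with h | h
            · have h2 := hpair v hvU hva h p2 hp2U hp2a hp2b
              exact h2 ▸ hx12
            · exact hpair p1 hp1U hp1a hp1b v hvU hva (Finset.mem_singleton.mp h)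
          have hVsub : V ⊆ {(fun i => if i = 0 then p1 0 else b1), (fun i => if i = 0 then p1 0 else b2)} := by
            intro v hv
            obtain ⟨hvU, hva⟩ := hVmem v hv
            have hvT := inT v hvU hva
            rw [hTeq] at hvT
            have hv0 := hrow v hv
            rcases Finset.mem_insert.mp hvT with h | h
            · exact Finset.mem_insert.mpr (Or.inl (fun2_ext (by simpa using hv0) (by simpa using h)))
            · exact Finset.mem_insert.mpr (Or.inr (Finset.mem_singleton.mpr
                (fun2_ext (by simpa using hv0) (by simpa using Finset.mem_singleton.mp h))))
          have hV2 : V.card ≤ 2 := (Finset.card_le_card hVsub).trans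
            ((Finset.card_insert_le _ _).trans (by simp))
          exact arith_b hq hU hVcard hm_le hV2
    · -- SUBCASES (c)
      push_neg at hTR
      by_cases hTR0 : (T ∩ Ra).Nonempty
      · -- SUBCASE (c.i)
        obtain ⟨b0, hb0⟩ := hTR0
        obtain ⟨hb0T, hb0Ra⟩ := Finset.mem_inter.mp hb0
        have huniq : ∀ y, y ∈ T → y ∈ Ra → y = b0 := by
          intro y hyT hyRa
          exact Finset.card_le_one.mp (arith_lt2 hTR) y (Finset.mem_inter.mpr ⟨hyT, hyRa⟩) b0 hb0
        obtain ⟨b1, hb1Ra, hb1ne⟩ := Finset.exists_mem_ne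
          (by rw [hRa_card]; exact hm2 : 1 < Ra.card) b0
        obtain ⟨w1, hw1U, hw1a, hw1b⟩ := memRa b1 hb1Ra
        obtain ⟨u0, hu0U, hu0a, hu0b⟩ := memRa b0 hb0Ra
        by_cases hesc : ∃ s ∈ U, s 0 ≠ a ∧ s 1 = b0 ∧ ∃ t ∈ U, t 0 ≠ a ∧ t 1 ≠ b0 ∧ t 0 ≠ s 0
        · obtain ⟨s, hsU, hsa, hsb, t, htU, hta, htb, hts⟩ := hesc
          have htb1 : t 1 ≠ b1 := by
            intro h
            exact htb (huniq (t 1) (inT t htU hta) (h ▸ hb1Ra))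
          refine shatter_pair U w1 s u0 s w1 t hw1U hsU hu0U hsU hw1U htU ?_ ?_ ?_ ?_ ?_ ?_ ?_ ?_ ?_
          · intro h; rw [← h] at hsa; exact hsa hw1a
          · exact not_adj_fst (by rw [hu0a, hw1a])
          · exact not_adj_snd (by rw [hu0b, hsb])
          · exact adj_of (by rw [hw1a]; exact hsa) (by rw [hsb, hw1b]; exact fun h => hb1ne h.symm)
          · exact not_adj_fst rfl
          · exact not_adj_fst rfl
          · exact adj_of (by rw [hw1a]; exact fun h => hsa h.symm) (by rw [hw1b, hsb]; exact hb1ne)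
          · exact adj_of (by rw [hw1a]; exact hta) (by rw [hw1b]; exact htb1)
          · exact adj_of hts (by rw [hsb]; exact htb)
        · exfalso
          push_neg at hesc
          obtain ⟨s0, hs0U, hs0a, hs0b⟩ := memT b0 hb0T
          by_cases hVx : ∃ t ∈ U, t 0 ≠ a ∧ t 1 ≠ b0
          · obtain ⟨t, htU, hta, htb⟩ := hVx
            have hrow : ∀ v ∈ V, v 0 = t 0 := by
              intro v hv
              obtain ⟨hvU, hva⟩ := hVmem v hv
              by_cases hvb : v 1 = b0
              · exact (hesc v hvU hva hvb t htU hta htb).symm ▸ rfl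
              · have h1 := hesc s0 hs0U hs0a hs0b v hvU hva hvb
                have h2 := hesc s0 hs0U hs0a hs0b t htU hta htb
                rw [h1, h2]
            have hVsub : V ⊆ U.filter fun u => u 0 = t 0 := by
              intro v hv
              exact Finset.mem_filter.mpr ⟨(hVmem v hv).1, hrow v hv⟩
            have ht0rows : t 0 ∈ (U.image fun u => u 0) := Finset.mem_image.mpr ⟨t, htU, rfl⟩
            have hVle : V.card ≤ m := (Finset.card_le_card hVsub).trans (hmax (t 0) ht0rows)
            have hmq : m = q := arith_ci1 hq hU hVcard hm_le hVle
            have hRau : Ra = Finset.univ := Finset.eq_univ_of_card Ra (by rw [hRa_card, hcardZ]; exact hmq)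
            have : t 1 = b0 := huniq (t 1) (inT t htU hta) (hRau ▸ Finset.mem_univ _)
            exact htb this
          · push_neg at hVx
            have hVle : V.card ≤ q - 1 := by
              have := Finset.card_le_card_of_injOn (s := V) (t := Finset.univ.erase a) (fun u => u 0)
                (fun u hu => Finset.mem_erase.mpr ⟨(hVmem u hu).2, Finset.mem_univ _⟩)
                (fun u hu v hv h => fun2_ext h
                  (by rw [hVx u (hVmem u hu).1 (hVmem u hu).2, hVx v (hVmem v hv).1 (hVmem v hv).2]))
              rwa [Finset.card_erase_of_mem (Finset.mem_univ a), Finset.card_univ, hcardZ] at this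
            exact arith_ci2 hq hU hVcard hm_le hVle
      · -- SUBCASE (c.ii) : T ∩ Ra = ∅
        have hdisj : ∀ y, y ∈ T → y ∈ Ra → False := by
          intro y h1 h2
          exact hTR0 ⟨y, Finset.mem_inter.mpr ⟨h1, h2⟩⟩
        by_cases hctr : ∃ v ∈ U, v 0 ≠ a ∧ (∃ r ∈ U, r 0 = v 0 ∧ r 1 ≠ v 1) ∧
            (∃ s ∈ U, s 1 = v 1 ∧ s 0 ≠ v 0)
        · obtain ⟨v, hvU, hva, ⟨r, hrU, hr0, hr1⟩, ⟨s, hsU, hs1, hs0⟩⟩ := hctr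
          have hra : r 0 ≠ a := by rw [hr0]; exact hva
          have hsa : s 0 ≠ a := by
            intro h
            exact hdisj (v 1) (inT v hvU hva) (hs1 ▸ inRa s hsU h)
          obtain ⟨p, hp⟩ := Finset.card_pos.mp (show 0 < (U.filter fun u => u 0 = a).card by rw [← hm]; exact arith_pos2 hm2)
          obtain ⟨hpU, hpa⟩ := Finset.mem_filter.mp hp
          have hpRa : p 1 ∈ Ra := inRa p hpU hpa
          have hpr : p 1 ≠ r 1 := fun h => hdisj (r 1) (inT r hrU hra) (h ▸ hpRa)
          have hps : p 1 ≠ s 1 := fun h => hdisj (s 1) (inT s hsU hsa) (h ▸ hpRa)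
          refine shatter_pair U r s v s r p hrU hsU hvU hsU hrU hpU ?_ ?_ ?_ ?_ ?_ ?_ ?_ ?_ ?_
          · intro h; rw [← h] at hs0; rw [hr0] at hs0; exact hs0 rfl
          · exact not_adj_fst (by rw [hr0])
          · exact not_adj_snd (by rw [hs1])
          · exact adj_of (by rw [hr0]; exact hs0) (by rw [hs1]; exact fun h => hr1 h.symm)
          · exact not_adj_fst rfl
          · exact not_adj_fst rfl
          · exact adj_of (by rw [hr0]; exact fun h => hs0 h.symm) (by rw [hs1]; exact hr1)
          · exact adj_of (by rw [hpa, hr0]; exact fun h => hva h.symm) hpr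
          · exact adj_of (by rw [hpa]; exact fun h => hsa h.symm) hps
        · exfalso
          push_neg at hctr
          set A := V.filter (fun v => ∃ r ∈ U, r 0 = v 0 ∧ r 1 ≠ v 1) with hA
          set B := V.filter (fun v => ¬ ∃ r ∈ U, r 0 = v 0 ∧ r 1 ≠ v 1) with hB
          have hABcard : A.card + B.card = V.card := by
            rw [hA, hB]; exact Finset.card_filter_add_card_filter_not _
          have hAcard : A.card ≤ q - m := by
            have := Finset.card_le_card_of_injOn (s := A) (t := Finset.univ \ Ra) (fun u => u 1)
              (fun u hu => by
                obtain ⟨huV, humate⟩ := Finset.mem_filter.mp hu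
                refine Finset.mem_sdiff.mpr ⟨Finset.mem_univ _, fun hc => ?_⟩
                exact hdisj (u 1) (inT u (hVmem u huV).1 (hVmem u huV).2) hc)
              (fun u hu v hv h => by
                obtain ⟨huV, humate⟩ := Finset.mem_filter.mp hu
                obtain ⟨hvV, hvmate⟩ := Finset.mem_filter.mp hv
                have := hctr u (hVmem u huV).1 (hVmem u huV).2 humate v (hVmem v hvV).1 h.symm
                exact fun2_ext this.symm h)
            have hsd : (Finset.univ \ Ra).card = q - m := by
              rw [Finset.card_sdiff_of_subset (Finset.subset_univ Ra), Finset.card_univ, hcardZ, hRa_card]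
            rw [hsd] at this
            exact this
          have hBcard : B.card ≤ q - 1 := by
            have := Finset.card_le_card_of_injOn (s := B) (t := Finset.univ.erase a) (fun u => u 0)
              (fun u hu => Finset.mem_erase.mpr
                ⟨(hVmem u (Finset.mem_filter.mp hu).1).2, Finset.mem_univ _⟩)
              (fun u hu v hv h => by
                obtain ⟨huV, humate⟩ := Finset.mem_filter.mp hu
                obtain ⟨hvV, hvmate⟩ := Finset.mem_filter.mp hv
                have hv1 : v 1 = u 1 := by
                  by_contra hc
                  exact humate ⟨v, (hVmem v hvV).1, h.symm, fun hh => hc hh⟩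
                exact fun2_ext h.symm hv1 |>.symm)
            rwa [Finset.card_erase_of_mem (Finset.mem_univ a), Finset.card_univ, hcardZ] at this
          exact arith_cii hq hU hVcard hm_le hABcard hAcard hBcard
  · -- COLUMN CASE : at most two columns, both full
    push_neg at hl
    have hfib : ∀ b ∈ (U.image fun u => u 1), (U.filter fun u => (fun u => u 1) u = b).card ≤ q := by
      intro b _
      exact fib_snd_le _ b (fun u hu => (Finset.mem_filter.mp hu).2)
    have hUle := Finset.card_le_mul_card_image (f := fun u => u 1) U q hfib
    have hc2 : (U.image fun u => u 1).card = 2 := by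
      by_contra hc
      have h1 : (U.image fun u => u 1).card ≤ 1 := arith_le1' hl hc
      exact arith_col hq hU (hUle.trans (Nat.mul_le_mul_left q h1))
    obtain ⟨b1, b2, hb12, hcols2⟩ := Finset.card_eq_two.mp hc2
    have hmemcol : ∀ u ∈ U, u 1 = b1 ∨ u 1 = b2 := by
      intro u hu
      have : u 1 ∈ (U.image fun u => u 1) := Finset.mem_image.mpr ⟨u, hu, rfl⟩
      rw [hcols2] at this
      rcases Finset.mem_insert.mp this with h | h
      · exact Or.inl h
      · exact Or.inr (Finset.mem_singleton.mp h)
    set F1 := U.filter (fun u => u 1 = b1) with hF1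
    set F2 := U.filter (fun u => u 1 = b2) with hF2
    have hsplit : F1.card + (U.filter fun u => ¬ u 1 = b1).card = U.card :=
      Finset.card_filter_add_card_filter_not _
    have hsub21 : (U.filter fun u => ¬ u 1 = b1) ⊆ F2 := by
      intro u hu
      obtain ⟨huU, hub⟩ := Finset.mem_filter.mp hu
      rcases hmemcol u huU with h | h
      · exact absurd h hub
      · exact Finset.mem_filter.mpr ⟨huU, h⟩
    have hsub12 : (U.filter fun u => ¬ u 1 = b2) ⊆ F1 := by
      intro u hu
      obtain ⟨huU, hub⟩ := Finset.mem_filter.mp hu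
      rcases hmemcol u huU with h | h
      · exact Finset.mem_filter.mpr ⟨huU, h⟩
      · exact absurd h hub
    have hsplit2 : F2.card + (U.filter fun u => ¬ u 1 = b2).card = U.card :=
      Finset.card_filter_add_card_filter_not _
    have hF2le : F2.card ≤ q := fib_snd_le _ b2 (fun u hu => (Finset.mem_filter.mp hu).2)
    have hF1le : F1.card ≤ q := fib_snd_le _ b1 (fun u hu => (Finset.mem_filter.mp hu).2)
    have hF1ge : q ≤ F1.card :=
      arith_colfull hU hsplit2 (Finset.card_le_card hsub12) hF2le
    have hF2ge : q ≤ F2.card :=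
      arith_colfull hU hsplit (Finset.card_le_card hsub21) hF1le
    have hfull1 : ∀ r : ZMod q, ∃ u ∈ F1, u 0 = r := by
      apply surj_of_card F1 (fun u => u 0)
      · intro u hu v hv h
        exact fun2_ext h (by rw [(Finset.mem_filter.mp hu).2, (Finset.mem_filter.mp hv).2])
      · rw [hcardZ]; exact hF1ge
    have hfull2 : ∀ r : ZMod q, ∃ u ∈ F2, u 0 = r := by
      apply surj_of_card F2 (fun u => u 0)
      · intro u hu v hv h
        exact fun2_ext h (by rw [(Finset.mem_filter.mp hu).2, (Finset.mem_filter.mp hv).2])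
      · rw [hcardZ]; exact hF2ge
    obtain ⟨w1, hw1F, hw1r⟩ := hfull1 0
    obtain ⟨w2, hw2F, hw2r⟩ := hfull1 1
    obtain ⟨u1, hu1F, hu1r⟩ := hfull2 1
    obtain ⟨u2, hu2F, hu2r⟩ := hfull2 0
    obtain ⟨uf, hufF, hufr⟩ := hfull2 2
    obtain ⟨hw1U, hw1b⟩ := Finset.mem_filter.mp hw1F
    obtain ⟨hw2U, hw2b⟩ := Finset.mem_filter.mp hw2F
    obtain ⟨hu1U, hu1b⟩ := Finset.mem_filter.mp hu1F
    obtain ⟨hu2U, hu2b⟩ := Finset.mem_filter.mp hu2F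
    obtain ⟨hufU, hufb⟩ := Finset.mem_filter.mp hufF
    refine shatter_pair U w1 w2 w1 u1 u2 uf hw1U hw2U hw1U hu1U hu2U hufU ?_ ?_ ?_ ?_ ?_ ?_ ?_ ?_ ?_
    · intro h; rw [h, hw2r] at hw1r; exact hz01 hw1r.symm
    · exact not_adj_fst rfl
    · exact not_adj_snd (by rw [hw1b, hw2b])
    · exact adj_of (by rw [hu1r, hw1r]; exact fun h => hz01 h.symm) (by rw [hu1b, hw1b]; exact fun h => hb12 h.symm)
    · exact not_adj_fst (by rw [hu1r, hw2r])
    · exact not_adj_fst (by rw [hu2r, hw1r])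
    · exact adj_of (by rw [hu2r, hw2r]; exact hz01) (by rw [hu2b, hw2b]; exact fun h => hb12 h.symm)
    · exact adj_of (by rw [hufr, hw1r]; exact fun h => hz02 h.symm) (by rw [hufb, hw1b]; exact fun h => hb12 h.symm)
    · exact adj_of (by rw [hufr, hw2r]; exact fun h => hz12 h.symm) (by rw [hufb, hw2b]; exact fun h => hb12 h.symm)
end
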